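/- Let φ : S → K be a semiring homomorphism between totally ordered semifields, each equipped with its canonical topology. Then the following are equivalent: (1) φ is continuous; (2) for every nonzero a ∈ K there exists a nonzero b ∈ S with φ(b) ≤ a; (3) for every nonzero a ∈ K there exists a nonzero b ∈ S with φ(b) < a. -/
import Mathlib


/-- A totally ordered idempotent semifield, assumed different from the Boolean semifield `𝔹`. -/
class IdemTOSemifield (K : Type*) extends CommSemiring K, LinearOrder K where
  add_eq_max : ∀ a b : K, a + b = max a b
  exists_inv : ∀ a : K, a ≠ 0 → ∃ b : K, a * b = 1
  exists_nontrivial_unit : ∃ a : K, a ≠ 0 ∧ a ≠ 1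

/-- The canonical topology on a totally ordered semifield. -/
def canonicalTopology (K : Type*) [IdemTOSemifield K] : TopologicalSpace K :=
  TopologicalSpace.generateFrom
    {s : Set K | (∃ a : K, a ≠ 0 ∧ s = {a}) ∨ (∃ a : K, a ≠ 0 ∧ s = Set.Iic a)}

section Aux

variable {K : Type*} [IdemTOSemifield K]

lemma ITOS.zero_le (a : K) : (0 : K) ≤ a := by
  have h : max (0 : K) a = a := by rw [← IdemTOSemifield.add_eq_max, zero_add]
  rw [← h]; exact le_max_left _ _

lemma ITOS.one_ne_zero : (1 : K) ≠ 0 := by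
  obtain ⟨a, ha, _⟩ := IdemTOSemifield.exists_nontrivial_unit (K := K)
  intro h
  exact ha (by rw [← mul_one a, h, mul_zero])

lemma ITOS.mul_ne_zero {a b : K} (ha : a ≠ 0) (hb : b ≠ 0) : a * b ≠ 0 := by
  obtain ⟨a', ha'⟩ := IdemTOSemifield.exists_inv a ha
  obtain ⟨b', hb'⟩ := IdemTOSemifield.exists_inv b hb
  intro h
  apply ITOS.one_ne_zero (K := K)
  calc (1 : K) = (a * a') * (b * b') := by rw [ha', hb', one_mul]
    _ = (a * b) * (a' * b') := by ring
    _ = 0 := by rw [h, zero_mul]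

lemma ITOS.mul_le_mul_left {a b : K} (c : K) (h : a ≤ b) : c * a ≤ c * b := by
  have h1 : a + b = b := by rw [IdemTOSemifield.add_eq_max, max_eq_right h]
  have h2 : c * a + c * b = c * b := by rw [← mul_add, h1]
  rw [IdemTOSemifield.add_eq_max] at h2
  rw [← h2]; exact le_max_left _ _

/-- There is an element strictly between `0` and `1`. -/
lemma ITOS.exists_small : ∃ c : K, c ≠ 0 ∧ c < 1 := by
  obtain ⟨u, hu0, hu1⟩ := IdemTOSemifield.exists_nontrivial_unit (K := K)
  rcases lt_or_gt_of_ne hu1 with h | h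
  · exact ⟨u, hu0, h⟩
  · obtain ⟨v, hv⟩ := IdemTOSemifield.exists_inv u hu0
    have hv0 : v ≠ 0 := by
      intro hv0
      exact ITOS.one_ne_zero (K := K) (by rw [← hv, hv0, mul_zero])
    refine ⟨v, hv0, ?_⟩
    by_contra hle
    push_neg at hle
    have : u * 1 ≤ u * v := ITOS.mul_le_mul_left u hle
    rw [mul_one, hv] at this
    exact absurd this (not_le.mpr h)

variable {S : Type*} [IdemTOSemifield S]

lemma ITOS.hom_mono (φ : S →+* K) {a b : S} (h : a ≤ b) : φ a ≤ φ b := by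
  have h1 : a + b = b := by rw [IdemTOSemifield.add_eq_max, max_eq_right h]
  have h2 : φ a + φ b = φ b := by rw [← map_add, h1]
  rw [IdemTOSemifield.add_eq_max] at h2
  rw [← h2]; exact le_max_left _ _

lemma ITOS.hom_ne_zero (φ : S →+* K) {b : S} (hb : b ≠ 0) : φ b ≠ 0 := by
  obtain ⟨c, hc⟩ := IdemTOSemifield.exists_inv b hb
  intro h
  apply ITOS.one_ne_zero (K := K)
  rw [← map_one φ, ← hc, map_mul, h, zero_mul]

/-- Any open set of the canonical topology containing `0` contains a set `Iic b`, `b ≠ 0`. -/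
lemma ITOS.open_zero_mem {U : Set K}
    (hU : TopologicalSpace.GenerateOpen
      {s : Set K | (∃ a : K, a ≠ 0 ∧ s = {a}) ∨ (∃ a : K, a ≠ 0 ∧ s = Set.Iic a)} U) :
    0 ∈ U → ∃ b : K, b ≠ 0 ∧ Set.Iic b ⊆ U := by
  induction hU with
  | basic s hs =>
      intro h0
      rcases hs with ⟨a, ha, rfl⟩ | ⟨a, ha, rfl⟩
      · exact absurd h0.symm ha
      · exact ⟨a, ha, subset_rfl⟩
  | univ =>
      exact fun _ => ⟨1, ITOS.one_ne_zero, Set.subset_univ _⟩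
  | inter u v _ _ ihu ihv =>
      intro h0
      obtain ⟨b, hb, hbu⟩ := ihu h0.1
      obtain ⟨c, hc, hcv⟩ := ihv h0.2
      refine ⟨min b c, ?_, ?_⟩
      · rcases min_cases b c with ⟨h, _⟩ | ⟨h, _⟩ <;> rw [h] <;> assumption
      · exact Set.subset_inter
          ((Set.Iic_subset_Iic.mpr (min_le_left _ _)).trans hbu)
          ((Set.Iic_subset_Iic.mpr (min_le_right _ _)).trans hcv)
  | sUnion T _ ih =>
      intro h0
      obtain ⟨t, ht, h0t⟩ := h0
      obtain ⟨b, hb, hsub⟩ := ih t ht h0t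
      exact ⟨b, hb, hsub.trans (Set.subset_sUnion_of_mem ht)⟩

end Aux

/-!
Statement 2: characterization of continuity of a homomorphism of totally ordered semifields
with respect to the canonical topologies.
-/

theorem continuous_hom_of_tosemifields_tfae {S K : Type*}
    [IdemTOSemifield S] [IdemTOSemifield K] (φ : S →+* K) :
    ((@Continuous S K (canonicalTopology S) (canonicalTopology K) φ ↔
        ∀ a : K, a ≠ 0 → ∃ b : S, b ≠ 0 ∧ φ b ≤ a) ∧
      ((∀ a : K, a ≠ 0 → ∃ b : S, b ≠ 0 ∧ φ b ≤ a) ↔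
        ∀ a : K, a ≠ 0 → ∃ b : S, b ≠ 0 ∧ φ b < a)) := by
  letI tS : TopologicalSpace S := canonicalTopology S
  letI tK : TopologicalSpace K := canonicalTopology K
  set gS : Set (Set S) :=
    {s : Set S | (∃ a : S, a ≠ 0 ∧ s = {a}) ∨ (∃ a : S, a ≠ 0 ∧ s = Set.Iic a)} with hgS
  have hopen_singleton : ∀ x : S, x ≠ 0 → IsOpen ({x} : Set S) := fun x hx =>
    TopologicalSpace.GenerateOpen.basic _ (Or.inl ⟨x, hx, rfl⟩)
  have hopen_Iic : ∀ x : S, x ≠ 0 → IsOpen (Set.Iic x) := fun x hx =>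
    TopologicalSpace.GenerateOpen.basic _ (Or.inr ⟨x, hx, rfl⟩)
  constructor
  · constructor
    · -- continuous → (2)
      intro hcont a ha
      have hIic : IsOpen (Set.Iic a) :=
        TopologicalSpace.GenerateOpen.basic _ (Or.inr ⟨a, ha, rfl⟩)
      have hpre : IsOpen (φ ⁻¹' Set.Iic a) := hcont.isOpen_preimage _ hIic
      have h0 : (0 : S) ∈ φ ⁻¹' Set.Iic a := by
        simp only [Set.mem_preimage, map_zero, Set.mem_Iic]
        exact ITOS.zero_le a
      obtain ⟨b, hb, hsub⟩ := ITOS.open_zero_mem hpre h0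
      exact ⟨b, hb, hsub (le_refl b)⟩
    · -- (2) → continuous
      intro h2
      apply (continuous_generateFrom_iff (b := {s : Set K |
        (∃ a : K, a ≠ 0 ∧ s = {a}) ∨ (∃ a : K, a ≠ 0 ∧ s = Set.Iic a)})).mpr
      rintro s (⟨a, ha, rfl⟩ | ⟨a, ha, rfl⟩)
      · -- preimage of {a}
        have : φ ⁻¹' {a} = ⋃ x ∈ φ ⁻¹' {a}, {x} := by
          ext x; simp
        rw [this]
        apply isOpen_biUnion
        intro x hx
        apply hopen_singleton
        intro hx0
        apply ha
        rw [Set.mem_preimage, Set.mem_singleton_iff, hx0, map_zero] at hx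
        exact hx.symm
      · -- preimage of Iic a
        obtain ⟨b, hb, hba⟩ := h2 a ha
        have hsub : Set.Iic b ⊆ φ ⁻¹' Set.Iic a := fun s hs =>
          Set.mem_Iic.mpr (le_trans (ITOS.hom_mono φ hs) hba)
        have : φ ⁻¹' Set.Iic a = Set.Iic b ∪ ⋃ x ∈ {x : S | x ∈ φ ⁻¹' Set.Iic a ∧ x ≠ 0}, {x} := by
          ext x
          constructor
          · intro hx
            by_cases hx0 : x = 0
            · exact Or.inl (by rw [hx0]; exact Set.mem_Iic.mpr (ITOS.zero_le b))
            · refine Or.inr ?_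
              simp only [Set.mem_iUnion, Set.mem_singleton_iff]
              exact ⟨x, ⟨hx, hx0⟩, rfl⟩
          · rintro (hx | hx)
            · exact hsub hx
            · simp only [Set.mem_iUnion, Set.mem_singleton_iff] at hx
              obtain ⟨y, ⟨hy, _⟩, rfl⟩ := hx
              exact hy
        rw [this]
        apply IsOpen.union (hopen_Iic b hb)
        apply isOpen_biUnion
        intro x hx
        exact hopen_singleton x hx.2
  · constructor
    · -- (2) → (3)
      intro h2 a ha
      obtain ⟨c, hc0, hc1⟩ := ITOS.exists_small (K := K)
      have hac : a * c ≠ 0 := ITOS.mul_ne_zero ha hc0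
      obtain ⟨b, hb, hba⟩ := h2 (a * c) hac
      refine ⟨b, hb, lt_of_le_of_lt hba ?_⟩
      have hle : a * c ≤ a := by
        have := ITOS.mul_le_mul_left a (le_of_lt hc1)
        rwa [mul_one] at this
      rcases lt_or_eq_of_le hle with h | h
      · exact h
      · exfalso
        obtain ⟨a', ha'⟩ := IdemTOSemifield.exists_inv a ha
        have : c = 1 := by
          calc c = 1 * c := (one_mul c).symm
            _ = (a * a') * c := by rw [ha']
            _ = a' * (a * c) := by ring
            _ = a' * a := by rw [h]
            _ = 1 := by rw [mul_comm, ha']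
        exact absurd this (ne_of_lt hc1)
    · -- (3) → (2)
      intro h3 a ha
      obtain ⟨b, hb, hba⟩ := h3 a ha
      exact ⟨b, hb, le_of_lt hba⟩
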